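/- Let (U, 𝒜) be a partial Steiner triple system and let R be a finite subset of U. Then there is at most one subsystem (S, 𝒯) of (U, 𝒜) such that R ⊆ S and |S| ≤ 2|R|. -/
import Mathlib


/-- `(U, A)` is a finite partial Steiner triple system: every block is a
3-element subset of `U`, and every pair of distinct points lies in at most
one block. -/
def IsPSTS {α : Type*} (U : Finset α) (A : Finset (Finset α)) : Prop :=
  (∀ b ∈ A, b.card = 3 ∧ b ⊆ U) ∧
  ∀ b₁ ∈ A, ∀ b₂ ∈ A, ∀ x y : α, x ≠ y →
    x ∈ b₁ → y ∈ b₁ → x ∈ b₂ → y ∈ b₂ → b₁ = b₂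

/-- `(V, B)` is a (complete) Steiner triple system. -/
def IsSTS {α : Type*} (V : Finset α) (B : Finset (Finset α)) : Prop :=
  (∀ b ∈ B, b.card = 3 ∧ b ⊆ V) ∧
  ∀ x ∈ V, ∀ y ∈ V, x ≠ y → ∃! b, b ∈ B ∧ x ∈ b ∧ y ∈ b

/-- `(S, T)` is a subsystem of the partial Steiner triple system `(U, A)`. -/
def IsSubsystem {α : Type*} [DecidableEq α] (U : Finset α) (A : Finset (Finset α))
    (S : Finset α) (T : Finset (Finset α)) : Prop :=
  S ⊆ U ∧ T ⊆ A ∧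
  (∀ b ∈ A, 2 ≤ (b ∩ S).card → b ∈ T ∧ b ⊆ S) ∧
  IsSTS S T

/-- A proper "closed" subset of an STS has at most (v-1)/2 points. -/
lemma key_lemma {α : Type*} [DecidableEq α] (V : Finset α) (B : Finset (Finset α))
    (hV : IsSTS V B) (S : Finset α) (hS : S ⊆ V)
    (hclosed : ∀ b ∈ B, 2 ≤ (b ∩ S).card → b ⊆ S)
    (v : α) (hv : v ∈ V) (hvS : v ∉ S) : 2 * S.card + 1 ≤ V.card := by
  classical
  have H : ∀ s : α, ∃ t : α, s ∈ S →
      t ∈ V \ insert v S ∧ ∃ b ∈ B, v ∈ b ∧ s ∈ b ∧ t ∈ b := by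
    intro s
    by_cases hs : s ∈ S
    · have hvs : v ≠ s := fun h => hvS (h ▸ hs)
      obtain ⟨b, ⟨hbB, hvb, hsb⟩, _⟩ := hV.2 v hv s (hS hs) hvs
      have hb3 : b.card = 3 := (hV.1 b hbB).1
      have hbV : b ⊆ V := (hV.1 b hbB).2
      have hsub : ({v, s} : Finset α) ⊆ b := by
        intro x hx; simp at hx; rcases hx with h | h <;> subst h <;> assumption
      have hcard2 : ({v, s} : Finset α).card = 2 := Finset.card_pair hvs
      have hne : (b \ {v, s}).Nonempty := by
        rw [← Finset.card_pos, Finset.card_sdiff_of_subset hsub, hb3, hcard2]; norm_num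
      obtain ⟨t, ht⟩ := hne
      have htb : t ∈ b := (Finset.mem_sdiff.mp ht).1
      have htvs : t ∉ ({v, s} : Finset α) := (Finset.mem_sdiff.mp ht).2
      have htv : t ≠ v := fun h => htvs (by simp [h])
      have hts : t ≠ s := fun h => htvs (by simp [h])
      refine ⟨t, fun _ => ⟨?_, b, hbB, hvb, hsb, htb⟩⟩
      rw [Finset.mem_sdiff, Finset.mem_insert]
      refine ⟨hbV htb, ?_⟩
      rintro (h | htS)
      · exact htv h
      · -- then b has two points in S, so b ⊆ S, so v ∈ S, contradiction
        have h2 : ({s, t} : Finset α) ⊆ b ∩ S := by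
          intro x hx; simp at hx
          rcases hx with h | h <;> subst h <;> exact Finset.mem_inter.mpr ⟨by assumption, by assumption⟩
        have : 2 ≤ (b ∩ S).card := by
          calc 2 = ({s, t} : Finset α).card := (Finset.card_pair (Ne.symm hts)).symm
          _ ≤ _ := Finset.card_le_card h2
        exact hvS ((hclosed b hbB this) hvb)
    · exact ⟨s, fun h => absurd h hs⟩
  choose f hf using H
  have hmaps : ∀ s ∈ S, f s ∈ V \ insert v S := fun s hs => (hf s hs).1
  have hinj : Set.InjOn f S := by
    intro s hs s' hs' heq
    obtain ⟨ht, b, hbB, hvb, hsb, htb⟩ := hf s hs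
    obtain ⟨ht', b', hbB', hvb', hsb', htb'⟩ := hf s' hs'
    have htV : f s ∈ V := (Finset.mem_sdiff.mp ht).1
    have htv : f s ≠ v := by
      intro h
      exact (Finset.mem_sdiff.mp ht).2 (Finset.mem_insert.mpr (Or.inl h))
    -- unique block through v and f s
    obtain ⟨c, _, hcuniq⟩ := hV.2 v hv (f s) htV (Ne.symm htv)
    have hb : b = c := hcuniq b ⟨hbB, hvb, htb⟩
    have hb' : b' = c := hcuniq b' ⟨hbB', hvb', heq ▸ htb'⟩
    have hbb : b = b' := hb.trans hb'.symm
    by_contra hne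
    have h2 : ({s, s'} : Finset α) ⊆ b ∩ S := by
      intro x hx; simp at hx
      rcases hx with h | h <;> subst h
      · exact Finset.mem_inter.mpr ⟨hsb, hs⟩
      · exact Finset.mem_inter.mpr ⟨hbb ▸ hsb', hs'⟩
    have : 2 ≤ (b ∩ S).card := by
      calc 2 = ({s, s'} : Finset α).card := (Finset.card_pair hne).symm
      _ ≤ _ := Finset.card_le_card h2
    exact hvS ((hclosed b hbB this) hvb)
  have hle : S.card ≤ (V \ insert v S).card :=
    Finset.card_le_card_of_injOn f hmaps hinj
  have hsub : insert v S ⊆ V := Finset.insert_subset hv hS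
  have hcard : (V \ insert v S).card = V.card - (S.card + 1) := by
    rw [Finset.card_sdiff_of_subset hsub, Finset.card_insert_of_notMem hvS]
  have hle2 : S.card + 1 ≤ V.card := by
    calc S.card + 1 = (insert v S).card := (Finset.card_insert_of_notMem hvS).symm
    _ ≤ V.card := Finset.card_le_card hsub
  omega

theorem stmt_3 {α : Type*} [DecidableEq α] (U : Finset α) (A : Finset (Finset α))
    (hUA : IsPSTS U A) (R : Finset α) (hR : R ⊆ U)
    (S₁ S₂ : Finset α) (T₁ T₂ : Finset (Finset α))
    (h₁ : IsSubsystem U A S₁ T₁) (h₂ : IsSubsystem U A S₂ T₂)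
    (hR₁ : R ⊆ S₁) (hR₂ : R ⊆ S₂)
    (hc₁ : S₁.card ≤ 2 * R.card) (hc₂ : S₂.card ≤ 2 * R.card) :
    S₁ = S₂ ∧ T₁ = T₂ := by
  classical
  have subset_claim : ∀ (Sa Sb : Finset α) (Ta Tb : Finset (Finset α)),
      IsSubsystem U A Sa Ta → IsSubsystem U A Sb Tb → R ⊆ Sa → R ⊆ Sb →
      Sa.card ≤ 2 * R.card → Sa ⊆ Sb := by
    intro Sa Sb Ta Tb ha hb hRa hRb hca
    by_contra hns
    obtain ⟨v, hvSa, hvSb⟩ := Finset.not_subset.mp hns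
    have hclosed : ∀ b ∈ Ta, 2 ≤ (b ∩ (Sa ∩ Sb)).card → b ⊆ Sa ∩ Sb := by
      intro b hbT hb2
      have hbA : b ∈ A := ha.2.1 hbT
      have hbSa : b ⊆ Sa := (ha.2.2.2.1 b hbT).2
      have hb2' : 2 ≤ (b ∩ Sb).card := by
        refine le_trans hb2 (Finset.card_le_card ?_)
        intro x hx
        rw [Finset.mem_inter] at hx ⊢
        exact ⟨hx.1, (Finset.mem_inter.mp hx.2).2⟩
      have hbSb : b ⊆ Sb := (hb.2.2.1 b hbA hb2').2
      exact Finset.subset_inter hbSa hbSb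
    have hkey := key_lemma Sa Ta ha.2.2.2 (Sa ∩ Sb) Finset.inter_subset_left
      hclosed v hvSa (fun h => hvSb (Finset.mem_inter.mp h).2)
    have hRsub : R ⊆ Sa ∩ Sb := Finset.subset_inter hRa hRb
    have := Finset.card_le_card hRsub
    omega
  have hS12 : S₁ ⊆ S₂ := subset_claim S₁ S₂ T₁ T₂ h₁ h₂ hR₁ hR₂ hc₁
  have hS21 : S₂ ⊆ S₁ := subset_claim S₂ S₁ T₂ T₁ h₂ h₁ hR₂ hR₁ hc₂
  have hS : S₁ = S₂ := Finset.Subset.antisymm hS12 hS21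
  have T_claim : ∀ (Sa Sb : Finset α) (Ta Tb : Finset (Finset α)),
      IsSubsystem U A Sa Ta → IsSubsystem U A Sb Tb → Sa = Sb → Ta ⊆ Tb := by
    intro Sa Sb Ta Tb ha hb hab
    intro b hbT
    have hbA : b ∈ A := ha.2.1 hbT
    have hbSa : b ⊆ Sa := (ha.2.2.2.1 b hbT).2
    have hb3 : b.card = 3 := (ha.2.2.2.1 b hbT).1
    have h2 : 2 ≤ (b ∩ Sb).card := by
      have : b ∩ Sb = b := Finset.inter_eq_left.mpr (hab ▸ hbSa)
      rw [this, hb3]; norm_num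
    exact (hb.2.2.1 b hbA h2).1
  exact ⟨hS, Finset.Subset.antisymm (T_claim S₁ S₂ T₁ T₂ h₁ h₂ hS)
    (T_claim S₂ S₁ T₂ T₁ h₂ h₁ hS.symm)⟩
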